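/- If a bitopological space X is j-separable, then X is ij-weakly Lindelöf. -/

import Mathlib

open Set Topology

universe u

variable {X : Type u}

/-- `X` with topologies `t1`, `t2` is ij-weakly Lindelöf: every `t1`-open cover admits a
countable subfamily whose union is `t2`-dense. -/
def IjWeaklyLindelof (t1 t2 : TopologicalSpace X) : Prop :=
  ∀ {ι : Type u} (U : ι → Set X), (∀ a, IsOpen[t1] (U a)) → (⋃ a, U a) = Set.univ →
    ∃ s : Set ι, s.Countable ∧ @closure X t2 (⋃ a ∈ s, U a) = Set.univ

theorem stmt5 (t1 t2 : TopologicalSpace X)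
    (hsep : ∃ D : Set X, D.Countable ∧ @closure X t2 D = Set.univ) :
    IjWeaklyLindelof t1 t2 := by
  obtain ⟨D, hDc, hDdense⟩ := hsep
  intro ι U _ hcov
  have hch : ∀ x : D, ∃ a, (x : X) ∈ U a := by
    intro x
    have : (x : X) ∈ ⋃ a, U a := hcov ▸ mem_univ _
    simpa using this
  choose f hf using hch
  refine ⟨Set.range f, (haveI := hDc.to_subtype; Set.countable_range f), ?_⟩
  have hsub : D ⊆ ⋃ a ∈ Set.range f, U a := by
    intro x hx
    exact mem_biUnion ⟨⟨x, hx⟩, rfl⟩ (hf ⟨x, hx⟩)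
  apply eq_univ_of_univ_subset
  rw [← hDdense]
  exact @closure_mono X t2 _ _ hsub
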